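/- Let G be a group generated by a finite set X, let E = ⊕_{i∈ℕ} E_i be an internal direct sum of non-trivial subgroups contained in the center of G, and for I ⊆ ℕ let E_I = ⟨E_i : i ∈ I⟩. Then the map from 2^ℕ (with the product topology) to N(G) (normal subgroups of G with the topology induced from 2^G) sending I to E_I is continuous. -/

import Mathlib

open scoped Classical

/-- Membership in a bounded supremum of subgroups of a commutative group is
given by finite products. -/
lemma mem_biSup_iff_finprod {M : Type*} [CommGroup M] (K : ℕ → Subgroup M)
    (S : Set ℕ) (x : M) :
    x ∈ (⨆ i ∈ S, K i) ↔ ∃ (t : Finset ℕ) (e : ℕ → M),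
      (↑t : Set ℕ) ⊆ S ∧ (∀ i, e i ∈ K i) ∧ x = ∏ i ∈ t, e i := by
  constructor
  · intro hx
    rw [iSup_subtype'] at hx
    refine Subgroup.iSup_induction (fun i : ↥S => K i)
      (C := fun y => ∃ (t : Finset ℕ) (e : ℕ → M),
        (↑t : Set ℕ) ⊆ S ∧ (∀ i, e i ∈ K i) ∧ y = ∏ i ∈ t, e i) hx ?_ ?_ ?_
    · intro i y hy
      refine ⟨{i.1}, Pi.mulSingle i.1 y, ?_, ?_, ?_⟩
      · simpa using i.2
      · intro j
        by_cases h : j = i.1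
        · subst h; simpa using hy
        · simp [Pi.mulSingle_eq_of_ne h, one_mem]
      · simp
    · exact ⟨∅, 1, by simp, fun i => one_mem _, by simp⟩
    · intro y z hy hz
      obtain ⟨t, e, htS, he, rfl⟩ := hy
      obtain ⟨t', e', ht'S, he', rfl⟩ := hz
      refine ⟨t ∪ t', fun j => (if j ∈ t then e j else 1) * (if j ∈ t' then e' j else 1),
        ?_, ?_, ?_⟩
      · intro j hj
        rcases Finset.mem_union.mp (by exact_mod_cast hj) with h | h
        · exact htS h
        · exact ht'S h
      · intro j
        refine mul_mem ?_ ?_ <;> split_ifs <;> simp [he j, he' j, one_mem]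
      · rw [Finset.prod_mul_distrib, Finset.prod_ite_mem, Finset.prod_ite_mem,
          Finset.union_inter_cancel_left, Finset.union_inter_cancel_right]
  · rintro ⟨t, e, htS, he, rfl⟩
    exact prod_mem fun i hi =>
      (le_iSup₂ (f := fun i (_ : i ∈ S) => K i) i (htS hi)) (he i)

/-- If independent subgroups of a commutative group have a product equal to `1`,
then all factors are `1`. -/
lemma eq_one_of_prod_eq_one {M : Type*} [CommGroup M] {K : ℕ → Subgroup M}
    (hind : iSupIndep K) (t : Finset ℕ) (e : ℕ → M) (he : ∀ i, e i ∈ K i)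
    (h1 : ∏ i ∈ t, e i = 1) : ∀ i ∈ t, e i = 1 := by
  have := Subgroup.eq_one_of_noncommProd_eq_one_of_iSupIndep t e
    (fun a _ b _ _ => mul_comm (e a) (e b)) K hind (fun i _ => he i)
  rw [Finset.noncommProd_eq_prod] at this
  exact this h1

lemma continuous_decide_forall_finset (t : Finset ℕ) :
    Continuous (fun f : ℕ → Bool => decide (∀ i ∈ t, f i = true)) := by
  classical
  induction t using Finset.induction_on with
  | empty => simpa using continuous_const
  | @insert a s ha ih =>
    have heq : (fun f : ℕ → Bool => decide (∀ i ∈ insert a s, f i = true))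
        = fun f : ℕ → Bool => (f a && decide (∀ i ∈ s, f i = true)) := by
      funext f
      simp [Finset.forall_mem_insert, Bool.decide_and]
    rw [heq]
    exact (continuous_of_discreteTopology (f := fun p : Bool × Bool => p.1 && p.2)).comp
      ((continuous_apply a).prodMk ih)

/-- for a central internal direct sum `E = ⊕ᵢ Eᵢ` in a finitely
generated group `G`, the map `2^ℕ → N(G) ⊆ 2^G`, `I ↦ E_I = ⟨Eᵢ : i ∈ I⟩`, is
continuous (both powers carrying the product topology). -/
theorem EI_continuous {G : Type*} [Group G]
    (X : Finset G) (hX : Subgroup.closure (X : Set G) = ⊤)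
    (E : ℕ → Subgroup G)
    (hcentral : ∀ i, E i ≤ Subgroup.center G)
    (hnt : ∀ i, E i ≠ ⊥)
    (hind : iSupIndep E) :
    Continuous (fun f : ℕ → Bool =>
      fun g : G => decide (g ∈ ⨆ i ∈ {j : ℕ | f j = true}, E i)) := by
  classical
  set C : Subgroup G := Subgroup.center G with hC
  letI : CommGroup C := { (inferInstance : Group C) with mul_comm := mul_comm' }
  set E' : ℕ → Subgroup C := fun i => (E i).subgroupOf C with hE'
  -- map of `E'` back to `G`
  have hmapE' : ∀ i, (E' i).map C.subtype = E i := by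
    intro i
    rw [hE', Subgroup.subgroupOf_map_subtype, inf_eq_left.mpr (hcentral i)]
  have hmap : ∀ S : Set ℕ, Subgroup.map C.subtype (⨆ i ∈ S, E' i) = ⨆ i ∈ S, E i := by
    intro S
    simp_rw [Subgroup.map_iSup, hmapE']
  have hmem_iff : ∀ (S : Set ℕ) (x : C), (↑x ∈ ⨆ i ∈ S, E i) ↔ x ∈ ⨆ i ∈ S, E' i := by
    intro S x
    rw [← hmap S]
    exact Subgroup.mem_map_iff_mem C.subtype_injective
  -- independence passes to `E'`
  have hind' : iSupIndep E' := by
    intro i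
    rw [disjoint_iff_inf_le]
    intro x hx
    have h1 : (x : G) ∈ E i := hx.1
    have h2 : (x : G) ∈ ⨆ j ∈ {j : ℕ | j ≠ i}, E j := by
      rw [hmem_iff]
      exact hx.2
    have : (x : G) ∈ E i ⊓ ⨆ j ≠ i, E j := ⟨h1, h2⟩
    rw [disjoint_iff.mp (hind i)] at this
    have hx1 : (x : G) = 1 := this
    simpa [Subgroup.mem_bot] using Subtype.ext hx1
  apply continuous_pi
  intro g
  by_cases hg : g ∈ ⨆ i, E i
  · have hgC : g ∈ C := (iSup_le hcentral) hg
    set x : C := ⟨g, hgC⟩ with hxdef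
    have hx : x ∈ ⨆ i ∈ (Set.univ : Set ℕ), E' i := by
      rw [← hmem_iff]
      simpa [iSup_univ] using hg
    obtain ⟨t, e, -, he, hprod⟩ := (mem_biSup_iff_finprod E' Set.univ x).mp hx
    set t₀ : Finset ℕ := t.filter (fun i => e i ≠ 1) with ht₀
    have hprod₀ : x = ∏ i ∈ t₀, e i := by
      rw [hprod, ht₀, Finset.prod_filter_ne_one]
    have key : ∀ S : Set ℕ, (x ∈ ⨆ i ∈ S, E' i) ↔ ∀ i ∈ t₀, i ∈ S := by
      intro S
      constructor
      · intro hxS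
        obtain ⟨t', e', ht'S, he', hprod'⟩ := (mem_biSup_iff_finprod E' S x).mp hxS
        set d : ℕ → C := fun j => (if j ∈ t₀ then e j else 1) * (if j ∈ t' then e' j else 1)⁻¹
          with hd
        have hdmem : ∀ j, d j ∈ E' j := by
          intro j
          refine mul_mem ?_ (inv_mem ?_) <;> split_ifs <;> simp [he j, he' j, one_mem]
        have hd1 : ∏ j ∈ t₀ ∪ t', d j = 1 := by
          rw [hd]
          simp only [Finset.prod_mul_distrib, Finset.prod_inv_distrib]
          rw [Finset.prod_ite_mem, Finset.prod_ite_mem,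
            Finset.union_inter_cancel_left, Finset.union_inter_cancel_right,
            ← hprod₀, ← hprod']
          simp
        have hall := eq_one_of_prod_eq_one hind' (t₀ ∪ t') d hdmem hd1
        intro i hi
        by_contra hiS
        have hit' : i ∉ t' := fun h => hiS (ht'S h)
        have : d i = 1 := hall i (Finset.mem_union_left _ hi)
        rw [hd] at this
        simp only [if_pos hi, if_neg hit', inv_one, mul_one] at this
        exact (Finset.mem_filter.mp hi).2 this
      · intro h
        exact (mem_biSup_iff_finprod E' S x).mpr
          ⟨t₀, e, fun i hi => h i hi, he, hprod₀⟩
    have heq : (fun f : ℕ → Bool => decide (g ∈ ⨆ i ∈ {j : ℕ | f j = true}, E i))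
        = fun f : ℕ → Bool => decide (∀ i ∈ t₀, f i = true) := by
      funext f
      apply decide_eq_decide.mpr
      rw [hmem_iff {j : ℕ | f j = true} x, key {j : ℕ | f j = true}]
      rfl
    rw [heq]
    exact continuous_decide_forall_finset t₀
  · have heq : (fun f : ℕ → Bool => decide (g ∈ ⨆ i ∈ {j : ℕ | f j = true}, E i))
        = fun _ => false := by
      funext f
      apply decide_eq_false
      intro h
      exact hg ((iSup₂_le fun i _ => le_iSup E i) h)
    rw [heq]
    exact continuous_const
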